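/- Let n and ε be positive real numbers and define φ : (n², ∞) → ℝ by φ(x) = x(1 − n²/x)^{2+ε}. Then for every x > n², φ'(x) + 2x·φ''(x) < 4. -/

import Mathlib

open Real Set Filter

/-- Second-order Bernoulli-type bound: `(1-v)^ε (1 + εv + ε(1+ε)v²/2) ≤ 1`. -/
lemma aux_key (ε : ℝ) (hε : 0 < ε) (v : ℝ) (hv0 : 0 ≤ v) (hv1 : v < 1) :
    (1 - v) ^ ε * (1 + ε * v + ε * (1 + ε) * v ^ 2 / 2) ≤ 1 := by
  set G : ℝ → ℝ := fun t => (1 - t) ^ ε * (1 + ε * t + ε * (1 + ε) * t ^ 2 / 2) with hGdef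
  have hDeriv : ∀ t : ℝ, t < 1 → HasDerivAt G
      ((-1 * ε * (1 - t) ^ (ε - 1)) * (1 + ε * t + ε * (1 + ε) * t ^ 2 / 2)
        + (1 - t) ^ ε * (ε + ε * (1 + ε) * t)) t := by
    intro t ht
    have h1t : (0:ℝ) < 1 - t := by linarith
    have hA : HasDerivAt (fun t : ℝ => (1 - t) ^ ε) (-1 * ε * (1 - t) ^ (ε - 1)) t := by
      exact ((hasDerivAt_id t).const_sub 1).rpow_const (Or.inl (ne_of_gt h1t))
    have hP : HasDerivAt (fun t : ℝ => 1 + ε * t + ε * (1 + ε) * t ^ 2 / 2)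
        (ε + ε * (1 + ε) * t) t := by
      have h2 : HasDerivAt (fun t : ℝ => t ^ 2) (2 * t) t := by
        simpa using hasDerivAt_pow 2 t
      have := (((hasDerivAt_id t).const_mul ε).const_add 1).add
        ((h2.const_mul (ε * (1 + ε))).div_const 2)
      refine this.congr_deriv ?_
      ring
    exact (hA.mul hP).congr_deriv (by ring)
  have hDnonpos : ∀ t : ℝ, 0 < t → t < 1 →
      (-1 * ε * (1 - t) ^ (ε - 1)) * (1 + ε * t + ε * (1 + ε) * t ^ 2 / 2)
        + (1 - t) ^ ε * (ε + ε * (1 + ε) * t) ≤ 0 := by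
    intro t ht0 ht1
    have h1t : (0:ℝ) < 1 - t := by linarith
    have hsplit : (1 - t) ^ ε = (1 - t) ^ (ε - 1) * (1 - t) := by
      rw [← Real.rpow_add_one (ne_of_gt h1t) (ε - 1)]
      ring_nf
    rw [hsplit]
    have hpos : (0:ℝ) < (1 - t) ^ (ε - 1) := Real.rpow_pos_of_pos h1t _
    have : (-1 * ε * (1 - t) ^ (ε - 1)) * (1 + ε * t + ε * (1 + ε) * t ^ 2 / 2)
        + (1 - t) ^ (ε - 1) * (1 - t) * (ε + ε * (1 + ε) * t)
        = (1 - t) ^ (ε - 1) * (-(ε * (1 + ε) * (2 + ε) / 2) * t ^ 2) := by ring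
    rw [this]
    have hneg : -(ε * (1 + ε) * (2 + ε) / 2) * t ^ 2 ≤ 0 := by
      have : 0 ≤ ε * (1 + ε) * (2 + ε) / 2 * t ^ 2 := by positivity
      linarith
    exact mul_nonpos_of_nonneg_of_nonpos hpos.le hneg
  have hanti : AntitoneOn G (Set.Icc 0 v) := by
    apply antitoneOn_of_deriv_nonpos (convex_Icc 0 v)
    · intro t ht
      exact (hDeriv t (lt_of_le_of_lt ht.2 hv1)).continuousAt.continuousWithinAt
    · intro t ht
      rw [interior_Icc] at ht
      exact (hDeriv t (lt_of_lt_of_le ht.2 hv1.le)).differentiableAt.differentiableWithinAt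
    · intro t ht
      rw [interior_Icc] at ht
      rw [(hDeriv t (lt_trans ht.2 hv1)).deriv]
      exact hDnonpos t ht.1 (lt_trans ht.2 hv1)
  have h0 : G 0 = 1 := by simp [hGdef]
  have := hanti (Set.left_mem_Icc.mpr hv0) (Set.mem_Icc.mpr ⟨hv0, le_refl v⟩) hv0
  rw [h0] at this
  exact this

lemma aux_deriv1 (n ε : ℝ) (hn : 0 < n) {y : ℝ} (hy : n ^ 2 < y) :
    HasDerivAt (fun z : ℝ => z * (1 - n ^ 2 / z) ^ (2 + ε))
      ((1 - n ^ 2 / y) ^ (2 + ε) + (2 + ε) * (n ^ 2 / y) * (1 - n ^ 2 / y) ^ (1 + ε)) y := by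
  have hn2 : (0:ℝ) < n ^ 2 := by positivity
  have hy0 : (0:ℝ) < y := lt_trans hn2 hy
  have hu0 : (0:ℝ) < 1 - n ^ 2 / y := by
    have := (div_lt_one hy0).mpr hy
    linarith
  have hq : HasDerivAt (fun z : ℝ => n ^ 2 / z) (-(n ^ 2 / y ^ 2)) y := by
    have h := (hasDerivAt_inv (ne_of_gt hy0)).const_mul (n ^ 2)
    simp only [div_eq_mul_inv]
    refine h.congr_deriv ?_
    ring
  have hu' : HasDerivAt (fun z : ℝ => 1 - n ^ 2 / z) (n ^ 2 / y ^ 2) y := by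
    simpa using hq.const_sub 1
  have hr : HasDerivAt (fun z : ℝ => (1 - n ^ 2 / z) ^ (2 + ε))
      (n ^ 2 / y ^ 2 * (2 + ε) * (1 - n ^ 2 / y) ^ (1 + ε)) y := by
    have := hu'.rpow_const (p := 2 + ε) (Or.inl (ne_of_gt hu0))
    rwa [show (2 + ε - 1 : ℝ) = 1 + ε by ring] at this
  have := (hasDerivAt_id y).mul hr
  refine this.congr_deriv ?_
  simp only [id]
  field_simp

lemma aux_deriv2 (n ε : ℝ) (hn : 0 < n) {y : ℝ} (hy : n ^ 2 < y) :
    HasDerivAt (fun z : ℝ =>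
        (1 - n ^ 2 / z) ^ (2 + ε) + (2 + ε) * (n ^ 2 / z) * (1 - n ^ 2 / z) ^ (1 + ε))
      ((2 + ε) * (1 + ε) * ((n ^ 2) ^ 2 / y ^ 3) * (1 - n ^ 2 / y) ^ ε) y := by
  have hn2 : (0:ℝ) < n ^ 2 := by positivity
  have hy0 : (0:ℝ) < y := lt_trans hn2 hy
  have hu0 : (0:ℝ) < 1 - n ^ 2 / y := by
    have := (div_lt_one hy0).mpr hy
    linarith
  have hq : HasDerivAt (fun z : ℝ => n ^ 2 / z) (-(n ^ 2 / y ^ 2)) y := by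
    have h := (hasDerivAt_inv (ne_of_gt hy0)).const_mul (n ^ 2)
    simp only [div_eq_mul_inv]
    refine h.congr_deriv ?_
    ring
  have hu' : HasDerivAt (fun z : ℝ => 1 - n ^ 2 / z) (n ^ 2 / y ^ 2) y := by
    simpa using hq.const_sub 1
  have hr : HasDerivAt (fun z : ℝ => (1 - n ^ 2 / z) ^ (2 + ε))
      (n ^ 2 / y ^ 2 * (2 + ε) * (1 - n ^ 2 / y) ^ (1 + ε)) y := by
    have := hu'.rpow_const (p := 2 + ε) (Or.inl (ne_of_gt hu0))
    rwa [show (2 + ε - 1 : ℝ) = 1 + ε by ring] at this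
  have hr2 : HasDerivAt (fun z : ℝ => (1 - n ^ 2 / z) ^ (1 + ε))
      (n ^ 2 / y ^ 2 * (1 + ε) * (1 - n ^ 2 / y) ^ ε) y := by
    have := hu'.rpow_const (p := 1 + ε) (Or.inl (ne_of_gt hu0))
    rwa [show (1 + ε - 1 : ℝ) = ε by ring] at this
  have hq2 : HasDerivAt (fun z : ℝ => (2 + ε) * (n ^ 2 / z)) ((2 + ε) * -(n ^ 2 / y ^ 2)) y :=
    hq.const_mul (2 + ε)
  have hB := hq2.mul hr2
  have htot := hr.add hB
  refine htot.congr_deriv ?_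
  have hsplit : (1 - n ^ 2 / y) ^ (1 + ε) = (1 - n ^ 2 / y) ^ ε * (1 - n ^ 2 / y) := by
    rw [← Real.rpow_add_one (ne_of_gt hu0) ε]
    ring_nf
  rw [hsplit]
  field_simp
  ring

/-- For `φ(x) = x (1 − n²/x)^{2+ε}` on `(n², ∞)`: `φ'(x) + 2x φ''(x) < 4`. -/
theorem stmt_11 (n ε : ℝ) (hn : 0 < n) (hε : 0 < ε)
    (φ : ℝ → ℝ)
    (hφ : ∀ x : ℝ, n ^ 2 < x → φ x = x * (1 - n ^ 2 / x) ^ (2 + ε)) :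
    ∀ x : ℝ, n ^ 2 < x →
      deriv φ x + 2 * x * deriv (deriv φ) x < 4 := by
  intro x hx
  have hn2 : (0:ℝ) < n ^ 2 := by positivity
  have hx0 : (0:ℝ) < x := lt_trans hn2 hx
  set ψ1 : ℝ → ℝ := fun z =>
    (1 - n ^ 2 / z) ^ (2 + ε) + (2 + ε) * (n ^ 2 / z) * (1 - n ^ 2 / z) ^ (1 + ε) with hψ1
  -- first derivative on the open set
  have hd1 : ∀ y : ℝ, n ^ 2 < y → deriv φ y = ψ1 y := by
    intro y hy
    have hmem : Set.Ioi (n ^ 2) ∈ nhds y := isOpen_Ioi.mem_nhds hy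
    have hev : φ =ᶠ[nhds y] fun z => z * (1 - n ^ 2 / z) ^ (2 + ε) :=
      Filter.eventuallyEq_of_mem hmem fun z hz => hφ z hz
    rw [hev.deriv_eq, (aux_deriv1 n ε hn hy).deriv]
  -- second derivative
  have hd2 : deriv (deriv φ) x =
      (2 + ε) * (1 + ε) * ((n ^ 2) ^ 2 / x ^ 3) * (1 - n ^ 2 / x) ^ ε := by
    have hmem : Set.Ioi (n ^ 2) ∈ nhds x := isOpen_Ioi.mem_nhds hx
    have hev : deriv φ =ᶠ[nhds x] ψ1 :=
      Filter.eventuallyEq_of_mem hmem fun z hz => hd1 z hz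
    rw [hev.deriv_eq, (aux_deriv2 n ε hn hx).deriv]
  rw [hd1 x hx, hd2]
  simp only [hψ1]
  -- now a pure inequality
  set t : ℝ := n ^ 2 / x with htdef
  have ht0 : 0 < t := by positivity
  have ht1 : t < 1 := (div_lt_one hx0).mpr hx
  have hu0 : (0:ℝ) < 1 - t := by linarith
  have hue : (0:ℝ) < (1 - t) ^ ε := Real.rpow_pos_of_pos hu0 ε
  have h2e : (1 - t) ^ (2 + ε) = (1 - t) ^ 2 * (1 - t) ^ ε := by
    rw [show (2 + ε : ℝ) = ε + 1 + 1 by ring, Real.rpow_add_one (ne_of_gt hu0),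
      Real.rpow_add_one (ne_of_gt hu0)]
    ring
  have h1e : (1 - t) ^ (1 + ε) = (1 - t) * (1 - t) ^ ε := by
    rw [show (1 + ε : ℝ) = ε + 1 by ring, Real.rpow_add_one (ne_of_gt hu0)]
    ring
  have hthird : 2 * x * ((2 + ε) * (1 + ε) * ((n ^ 2) ^ 2 / x ^ 3) * (1 - t) ^ ε)
      = 2 * (2 + ε) * (1 + ε) * t ^ 2 * (1 - t) ^ ε := by
    rw [htdef]
    field_simp
  rw [h2e, h1e, hthird]
  have hk := aux_key ε hε t ht0.le ht1
  -- Q < 4 P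
  have hQ : (1 - t) ^ 2 + (2 + ε) * t * (1 - t) + 2 * (2 + ε) * (1 + ε) * t ^ 2
      < 4 * (1 + ε * t + ε * (1 + ε) * t ^ 2 / 2) := by
    nlinarith [mul_pos ht0 (sub_pos.mpr ht1), sq_nonneg t, mul_pos hε (mul_pos ht0 (sub_pos.mpr ht1))]
  nlinarith [mul_lt_mul_of_pos_left hQ hue, hk, hue]
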